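/- Every first countable topological space is premetrisable: there exists a premetric d on X whose generated topology τ_d equals the original topology. -/

import Mathlib

open scoped NNReal

/-- ε-δ continuity between premetric spaces. -/
def IsEDContinuous {X Y : Type*} (d : X → X → ℝ≥0) (m : Y → Y → ℝ≥0) (f : X → Y) : Prop :=
  ∀ x : X, ∀ ε : ℝ≥0, 0 < ε → ∃ δ : ℝ≥0, 0 < δ ∧ ∀ x', d x x' < δ → m (f x) (f x') < ε

/-- Topology generated by a premetric. -/
def premetricTopology {X : Type*} (d : X → X → ℝ≥0) : TopologicalSpace X where
  IsOpen U := ∀ x ∈ U, ∃ ε : ℝ≥0, 0 < ε ∧ ∀ y, d x y < ε → y ∈ U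
  isOpen_univ := fun _ _ => ⟨1, one_pos, fun _ _ => trivial⟩
  isOpen_inter := by
    rintro s t hs ht x ⟨hxs, hxt⟩
    obtain ⟨ε₁, hε₁, h₁⟩ := hs x hxs
    obtain ⟨ε₂, hε₂, h₂⟩ := ht x hxt
    exact ⟨min ε₁ ε₂, lt_min hε₁ hε₂, fun y hy =>
      ⟨h₁ y (hy.trans_le (min_le_left _ _)), h₂ y (hy.trans_le (min_le_right _ _))⟩⟩
  isOpen_sUnion := by
    rintro S hS x ⟨s, hsS, hxs⟩
    obtain ⟨ε, hε, h⟩ := hS s hsS x hxs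
    exact ⟨ε, hε, fun y hy => ⟨s, hsS, h y hy⟩⟩

/-- every first countable space is premetrisable. -/
theorem firstCountable_premetrisable {X : Type*} [t : TopologicalSpace X]
    [FirstCountableTopology X] :
    ∃ d : X → X → ℝ≥0, (∀ x, d x x = 0) ∧ premetricTopology d = t := by
  classical
  have hbas : ∀ x : X, ∃ b : ℕ → Set X, (nhds x).HasAntitoneBasis b :=
    fun x => (nhds x).exists_antitone_basis
  choose b hb using hbas
  have hmem : ∀ x n, b x n ∈ nhds x := fun x n => (hb x).mem n
  set d : X → X → ℝ≥0 := fun x y =>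
    if h : ∃ n, y ∉ b x n then (1/2 : ℝ≥0) ^ (Nat.find h) else 0 with hd
  have half_lt_one : (1/2 : ℝ≥0) < 1 := by rw [← NNReal.coe_lt_coe]; norm_num
  have half_pos : (0 : ℝ≥0) < 1/2 := by norm_num
  -- d x y < (1/2)^n → y ∈ b x n
  have key1 : ∀ x y n, d x y < (1/2 : ℝ≥0) ^ n → y ∈ b x n := by
    intro x y n hlt
    by_contra hy
    have hex : ∃ m, y ∉ b x m := ⟨n, hy⟩
    rw [hd] at hlt
    simp only [dif_pos hex] at hlt
    have hfind : n < Nat.find hex := by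
      exact (pow_lt_pow_iff_right_of_lt_one₀ half_pos half_lt_one).mp hlt
    exact (Nat.find_min hex hfind) hy
  -- y ∈ b x n → d x y < (1/2)^n
  have key2 : ∀ x y n, y ∈ b x n → d x y < (1/2 : ℝ≥0) ^ n := by
    intro x y n hy
    rw [hd]
    by_cases hex : ∃ m, y ∉ b x m
    · simp only [dif_pos hex]
      have hn : n < Nat.find hex := by
        by_contra hle
        push_neg at hle
        exact Nat.find_spec hex ((hb x).antitone hle hy)
      exact (pow_lt_pow_iff_right_of_lt_one₀ half_pos half_lt_one).mpr hn
    · simp only [dif_neg hex]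
      exact pow_pos half_pos n
  refine ⟨d, ?_, ?_⟩
  · intro x
    have hnex : ¬ ∃ n, x ∉ b x n := by
      push_neg
      exact fun n => mem_of_mem_nhds (hmem x n)
    simp [hd, hnex]
  · apply TopologicalSpace.ext
    funext U
    apply propext
    constructor
    · intro hU
      rw [isOpen_iff_mem_nhds]
      intro x hx
      obtain ⟨ε, hε, hball⟩ := hU x hx
      obtain ⟨n, hn⟩ := NNReal.exists_pow_lt_of_lt_one hε half_lt_one
      exact Filter.mem_of_superset (hmem x n)
        (fun y hy => hball y ((key2 x y n hy).trans hn))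
    · intro hU x hx
      obtain ⟨n, -, hn⟩ := ((hb x).toHasBasis.mem_iff).mp (hU.mem_nhds hx)
      exact ⟨(1/2) ^ n, pow_pos half_pos n, fun y hy => hn (key1 x y n hy)⟩
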